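/- Let Ω ⊂ ℝ³ be a nonempty bounded open set, let σ ∈ (0, 1/√3), and set r(x) = σ · dist(x, Ωᶜ) for x ∈ Ω. Let φ : ℝ³ → ℝ be a nonnegative measurable function with φ(x) = 0 whenever |x| ≥ 2/3 and ∫_{ℝ³} φ(x) dx = 1. Then for every z ∈ Ω, ∫_Ω r(x)⁻³ φ((x − z)/r(x)) dx ≤ 1/(1 − √3 σ). -/

import Mathlib

open MeasureTheory

lemma det_rank_one (a : ℝ) (ℓ : (EuclideanSpace ℝ (Fin 3)) →L[ℝ] ℝ)
    (v : EuclideanSpace ℝ (Fin 3)) :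
    (a • (1 : (EuclideanSpace ℝ (Fin 3)) →L[ℝ] (EuclideanSpace ℝ (Fin 3))) + ℓ.smulRight v).det
      = a ^ 3 + a ^ 2 * ℓ v := by
  classical
  let b : Module.Basis (Fin 3) ℝ (EuclideanSpace ℝ (Fin 3)) := (EuclideanSpace.basisFun (Fin 3) ℝ).toBasis
  have hdet : (a • (1 : (EuclideanSpace ℝ (Fin 3)) →L[ℝ] (EuclideanSpace ℝ (Fin 3)))
        + ℓ.smulRight v).det
      = Matrix.det (LinearMap.toMatrix b b
          (a • (1 : (EuclideanSpace ℝ (Fin 3)) →L[ℝ] (EuclideanSpace ℝ (Fin 3)))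
            + ℓ.smulRight v).toLinearMap) := by
    rw [LinearMap.det_toMatrix]
  have hv : ℓ v = ∑ i : Fin 3, b.repr v i * ℓ (b i) := by
    conv_lhs => rw [← b.sum_repr v]
    rw [map_sum]
    simp [smul_eq_mul]
  have hM : (LinearMap.toMatrix b b (a • (1 : (EuclideanSpace ℝ (Fin 3)) →L[ℝ] (EuclideanSpace ℝ (Fin 3))) + ℓ.smulRight v).toLinearMap)
      = Matrix.of fun i j => a * (if j = i then 1 else 0) + ℓ (b j) * b.repr v i := by
    ext i j
    rw [LinearMap.toMatrix_apply]
    have h2 : (a • (1 : (EuclideanSpace ℝ (Fin 3)) →L[ℝ] (EuclideanSpace ℝ (Fin 3))) + ℓ.smulRight v).toLinearMap (b j)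
        = a • (b j) + ℓ (b j) • v := by
      simp [ContinuousLinearMap.smulRight_apply]
    rw [h2]
    simp [Finsupp.single_apply]
  rw [hdet, hM, Matrix.det_fin_three, hv, Fin.sum_univ_three]
  simp only [Matrix.of_apply]
  norm_num [Fin.ext_iff]
  ring


set_option maxHeartbeats 2000000 in
/-- Uniform bound for the variable-scale mollifier: for `Ω ⊂ ℝ³` nonempty bounded open,
`σ ∈ (0, 1/√3)`, `r(x) = σ·dist(x, Ωᶜ)`, and `φ ≥ 0` measurable, vanishing for `|x| ≥ 2/3`
and with `∫ φ = 1`, one has, for every `z ∈ Ω`,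
`∫_Ω r(x)⁻³ φ((x−z)/r(x)) dx ≤ 1/(1 − √3 σ)`. -/
theorem stmt_4 (Ω : Set (EuclideanSpace ℝ (Fin 3))) (hne : Ω.Nonempty) (hopen : IsOpen Ω)
    (hbdd : Bornology.IsBounded Ω) (σ : ℝ) (hσ0 : 0 < σ) (hσ1 : σ < 1 / Real.sqrt 3)
    (φ : EuclideanSpace ℝ (Fin 3) → ℝ) (hφm : Measurable φ) (hφ0 : ∀ x, 0 ≤ φ x)
    (hφsupp : ∀ x, 2 / 3 ≤ ‖x‖ → φ x = 0) (hφ1 : ∫ x, φ x = 1) :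
    ∀ z ∈ Ω,
      ∫ x in Ω,
          ((σ * Metric.infDist x Ωᶜ) ^ 3)⁻¹ *
            φ ((σ * Metric.infDist x Ωᶜ)⁻¹ • (x - z)) ≤
        1 / (1 - Real.sqrt 3 * σ) := by
  intro z hz
  classical
  have h3 : (0:ℝ) < Real.sqrt 3 := Real.sqrt_pos.2 (by norm_num)
  have h31 : (1:ℝ) ≤ Real.sqrt 3 := by
    rw [show (1:ℝ) = Real.sqrt 1 from Real.sqrt_one.symm]
    exact Real.sqrt_le_sqrt (by norm_num)
  have hσ3 : Real.sqrt 3 * σ < 1 := by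
    have := (lt_div_iff₀ h3).1 hσ1
    linarith [this]
  have hc : (0:ℝ) < 1 - Real.sqrt 3 * σ := by linarith
  have hσlt1 : σ < 1 := lt_of_lt_of_le hσ1 (by
    rw [div_le_one h3]; exact h31)
  -- Ωᶜ is nonempty
  have hΩc : Ωᶜ.Nonempty := by
    obtain ⟨R, hR⟩ := hbdd.subset_closedBall z
    have hR0 : 0 ≤ R := by
      have := hR hz
      rw [Metric.mem_closedBall, dist_self] at this
      exact this
    refine ⟨z + (R + 1) • EuclideanSpace.single (0 : Fin 3) (1:ℝ), fun hmem => ?_⟩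
    have h1 := hR hmem
    rw [Metric.mem_closedBall] at h1
    have h2 : dist (z + (R + 1) • EuclideanSpace.single (0 : Fin 3) (1:ℝ)) z = R + 1 := by
      rw [dist_eq_norm]
      simp [norm_smul, EuclideanSpace.norm_single, abs_of_nonneg (by linarith : (0:ℝ) ≤ R + 1)]
    rw [h2] at h1
    linarith
  have hlip : LipschitzWith 1 (fun x => Metric.infDist x Ωᶜ) := Metric.lipschitz_infDist_pt Ωᶜ
  have hdpos : ∀ x ∈ Ω, 0 < Metric.infDist x Ωᶜ := by
    intro x hx
    rw [← IsClosed.notMem_iff_infDist_pos hopen.isClosed_compl hΩc]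
    simpa using hx
  -- abbreviations
  set T : EuclideanSpace ℝ (Fin 3) → EuclideanSpace ℝ (Fin 3) :=
    fun x => (σ * Metric.infDist x Ωᶜ)⁻¹ • (x - z) with hT
  set F' : EuclideanSpace ℝ (Fin 3) → (EuclideanSpace ℝ (Fin 3) →L[ℝ] EuclideanSpace ℝ (Fin 3)) :=
    fun x => (σ * Metric.infDist x Ωᶜ)⁻¹ • (1 : EuclideanSpace ℝ (Fin 3) →L[ℝ] EuclideanSpace ℝ (Fin 3))
      + ((-(((σ * Metric.infDist x Ωᶜ)⁻¹) ^ 2 * σ)) •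
          fderiv ℝ (fun y => Metric.infDist y Ωᶜ) x).smulRight (x - z) with hF'
  set S : Set (EuclideanSpace ℝ (Fin 3)) :=
    (Ω ∩ {x | ‖T x‖ < 2 / 3}) ∩ {x | DifferentiableAt ℝ (fun y => Metric.infDist y Ωᶜ) x} with hS
  have hsub : S ⊆ Ω := fun x hx => hx.1.1
  have hTmeas : Measurable T := by
    apply Measurable.fun_smul
    · exact ((continuous_const.mul (Metric.continuous_infDist_pt Ωᶜ)).measurable).inv
    · exact (continuous_id.sub continuous_const).measurable
  have hSmeas : MeasurableSet S := by
    refine (hopen.measurableSet.inter ?_).inter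
      (measurableSet_of_differentiableAt ℝ (fun y => Metric.infDist y Ωᶜ))
    exact measurableSet_lt hTmeas.norm measurable_const
  -- derivative of T on S
  have hder : ∀ x ∈ S, HasFDerivAt T (F' x) x := by
    rintro x ⟨⟨hxΩ, hxT⟩, hxD⟩
    have hne0 : σ * Metric.infDist x Ωᶜ ≠ 0 := (mul_pos hσ0 (hdpos x hxΩ)).ne'
    have h1 : HasFDerivAt (fun y => σ * Metric.infDist y Ωᶜ)
        (σ • fderiv ℝ (fun y => Metric.infDist y Ωᶜ) x) x :=
      (hxD.hasFDerivAt).const_mul σ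
    have h2 : HasFDerivAt (fun y => (σ * Metric.infDist y Ωᶜ)⁻¹)
        ((-((σ * Metric.infDist x Ωᶜ) ^ 2)⁻¹) •
          (σ • fderiv ℝ (fun y => Metric.infDist y Ωᶜ) x)) x :=
      (hasDerivAt_inv hne0).comp_hasFDerivAt x h1
    have h4 := h2.smul ((hasFDerivAt_id x).sub_const z)
    have heq : (σ * Metric.infDist x Ωᶜ)⁻¹
          • (1 : EuclideanSpace ℝ (Fin 3) →L[ℝ] EuclideanSpace ℝ (Fin 3))
        + ((-((σ * Metric.infDist x Ωᶜ) ^ 2)⁻¹) •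
            (σ • fderiv ℝ (fun y => Metric.infDist y Ωᶜ) x)).smulRight (x - z) = F' x := by
      rw [hF']
      congr 2
      rw [smul_smul]
      congr 1
      rw [inv_pow]
      ring
    rw [← heq]
    exact h4
  have hderW : ∀ x ∈ S, HasFDerivWithinAt T (F' x) S x :=
    fun x hx => (hder x hx).hasFDerivWithinAt
  -- determinant lower bound on S
  have hdetlb : ∀ x ∈ S,
      ((σ * Metric.infDist x Ωᶜ) ^ 3)⁻¹ * (1 - Real.sqrt 3 * σ) ≤ |(F' x).det| := by
    rintro x ⟨⟨hxΩ, hxT⟩, hxD⟩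
    have hd0 : 0 < Metric.infDist x Ωᶜ := hdpos x hxΩ
    have ha : 0 < (σ * Metric.infDist x Ωᶜ)⁻¹ := inv_pos.2 (mul_pos hσ0 hd0)
    set a : ℝ := (σ * Metric.infDist x Ωᶜ)⁻¹ with haa
    have hdet : (F' x).det = a ^ 3 + a ^ 2 *
        (((-(a ^ 2 * σ)) • fderiv ℝ (fun y => Metric.infDist y Ωᶜ) x) (x - z)) :=
      det_rank_one a _ (x - z)
    have hDn : ‖fderiv ℝ (fun y => Metric.infDist y Ωᶜ) x‖ ≤ 1 := by
      have := norm_fderiv_le_of_lipschitz ℝ hlip (x₀ := x)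
      simpa using this
    have hTx : a * ‖x - z‖ < 2 / 3 := by
      have : ‖T x‖ = a * ‖x - z‖ := by
        simp only [hT]
        rw [norm_smul, Real.norm_eq_abs, abs_of_pos ha]
      rw [← this]
      exact hxT
    have hxz0 : 0 ≤ ‖x - z‖ := norm_nonneg _
    have hest : |a ^ 2 * (((-(a ^ 2 * σ)) • fderiv ℝ (fun y => Metric.infDist y Ωᶜ) x) (x - z))|
        ≤ a ^ 3 * (Real.sqrt 3 * σ) := by
      have h5 : |(fderiv ℝ (fun y => Metric.infDist y Ωᶜ) x) (x - z)| ≤ ‖x - z‖ := by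
        calc |(fderiv ℝ (fun y => Metric.infDist y Ωᶜ) x) (x - z)|
            ≤ ‖fderiv ℝ (fun y => Metric.infDist y Ωᶜ) x‖ * ‖x - z‖ :=
              (fderiv ℝ (fun y => Metric.infDist y Ωᶜ) x).le_opNorm (x - z)
          _ ≤ 1 * ‖x - z‖ := by
              apply mul_le_mul_of_nonneg_right hDn hxz0
          _ = ‖x - z‖ := one_mul _
      have happ : ((-(a ^ 2 * σ)) • fderiv ℝ (fun y => Metric.infDist y Ωᶜ) x) (x - z)
          = (-(a ^ 2 * σ)) * (fderiv ℝ (fun y => Metric.infDist y Ωᶜ) x) (x - z) := rfl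
      rw [happ]
      have : |a ^ 2 * ((-(a ^ 2 * σ)) * (fderiv ℝ (fun y => Metric.infDist y Ωᶜ) x) (x - z))|
          = a ^ 4 * σ * |(fderiv ℝ (fun y => Metric.infDist y Ωᶜ) x) (x - z)| := by
        simp only [abs_mul, abs_neg, abs_pow, abs_of_pos ha, abs_of_pos hσ0]
        ring
      rw [this]
      calc a ^ 4 * σ * |(fderiv ℝ (fun y => Metric.infDist y Ωᶜ) x) (x - z)|
          ≤ a ^ 4 * σ * ‖x - z‖ := by
            apply mul_le_mul_of_nonneg_left h5
            positivity
        _ = (a ^ 3 * σ) * (a * ‖x - z‖) := by ring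
        _ ≤ (a ^ 3 * σ) * (2 / 3) := by
            apply mul_le_mul_of_nonneg_left hTx.le
            positivity
        _ ≤ a ^ 3 * (Real.sqrt 3 * σ) := by
            have h23 : (2:ℝ) / 3 ≤ Real.sqrt 3 := by linarith
            have h24 : (0:ℝ) ≤ a ^ 3 * σ := by positivity
            nlinarith [mul_le_mul_of_nonneg_left h23 h24]
    have hinv : ((σ * Metric.infDist x Ωᶜ) ^ 3)⁻¹ = a ^ 3 := by
      rw [haa, inv_pow]
    rw [hinv, hdet]
    have habs := abs_le.1 hest
    have : a ^ 3 * (1 - Real.sqrt 3 * σ) ≤ a ^ 3 + a ^ 2 *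
        (((-(a ^ 2 * σ)) • fderiv ℝ (fun y => Metric.infDist y Ωᶜ) x) (x - z)) := by
      nlinarith [habs.1]
    calc a ^ 3 * (1 - Real.sqrt 3 * σ) ≤ a ^ 3 + a ^ 2 *
        (((-(a ^ 2 * σ)) • fderiv ℝ (fun y => Metric.infDist y Ωᶜ) x) (x - z)) := this
      _ ≤ |a ^ 3 + a ^ 2 *
        (((-(a ^ 2 * σ)) • fderiv ℝ (fun y => Metric.infDist y Ωᶜ) x) (x - z))| := le_abs_self _
  -- injectivity of T on S
  have hinj : Set.InjOn T S := by
    rintro x ⟨⟨hxΩ, hxT⟩, _⟩ y ⟨⟨hyΩ, hyT⟩, _⟩ hxy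
    by_contra hnexy
    have hxy0 : (0:ℝ) < ‖x - y‖ := by
      rw [norm_pos_iff, sub_ne_zero]
      exact hnexy
    have hrx : σ * Metric.infDist x Ωᶜ ≠ 0 := (mul_pos hσ0 (hdpos x hxΩ)).ne'
    have hry : σ * Metric.infDist y Ωᶜ ≠ 0 := (mul_pos hσ0 (hdpos y hyΩ)).ne'
    have hx' : x - z = (σ * Metric.infDist x Ωᶜ) • T x := by
      rw [hT]; rw [smul_smul, mul_inv_cancel₀ hrx, one_smul]
    have hy' : y - z = (σ * Metric.infDist y Ωᶜ) • T y := by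
      rw [hT]; rw [smul_smul, mul_inv_cancel₀ hry, one_smul]
    have hsubxy : x - y = (σ * Metric.infDist x Ωᶜ - σ * Metric.infDist y Ωᶜ) • T x := by
      have h0 : x - y = (x - z) - (y - z) := by abel
      rw [h0, hx', hy', hxy, ← sub_smul]
    have hdd : |σ * Metric.infDist x Ωᶜ - σ * Metric.infDist y Ωᶜ| ≤ σ * ‖x - y‖ := by
      have h6 := hlip.dist_le_mul x y
      rw [Real.dist_eq] at h6
      rw [← mul_sub, abs_mul, abs_of_pos hσ0]
      have : dist x y = ‖x - y‖ := dist_eq_norm x y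
      rw [this] at h6
      have h7 : |Metric.infDist x Ωᶜ - Metric.infDist y Ωᶜ| ≤ ‖x - y‖ := by
        simpa using h6
      exact mul_le_mul_of_nonneg_left h7 hσ0.le
    have hnorm : ‖x - y‖ ≤ (σ * ‖x - y‖) * (2 / 3) := by
      calc ‖x - y‖ = |σ * Metric.infDist x Ωᶜ - σ * Metric.infDist y Ωᶜ| * ‖T x‖ := by
            rw [hsubxy, norm_smul, Real.norm_eq_abs]
        _ ≤ (σ * ‖x - y‖) * (2 / 3) := by
            have hxT' : ‖T x‖ ≤ 2 / 3 := le_of_lt hxT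
            apply mul_le_mul hdd hxT' (norm_nonneg _)
            positivity
    have h8 : σ * ‖x - y‖ < ‖x - y‖ := by
      have h9 := mul_lt_mul_of_pos_right hσlt1 hxy0
      linarith
    linarith
  -- φ is integrable
  have hφint : Integrable φ := by
    by_contra hcon
    rw [integral_undef hcon] at hφ1
    norm_num at hφ1
  -- change of variables
  have himg : ∫ x in S, |(F' x).det| • φ (T x) = ∫ y in T '' S, φ y :=
    (integral_image_eq_integral_abs_det_fderiv_smul volume hSmeas hderW hinj φ).symm
  have hg_int : IntegrableOn (fun x => |(F' x).det| • φ (T x)) S := by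
    exact (integrableOn_image_iff_integrableOn_abs_det_fderiv_smul volume hSmeas hderW hinj φ).1
      hφint.integrableOn
  have hle1 : ∫ y in T '' S, φ y ≤ 1 := by
    rw [← hφ1]
    exact setIntegral_le_integral hφint (Filter.Eventually.of_forall hφ0)
  -- the comparison function
  set g : EuclideanSpace ℝ (Fin 3) → ℝ :=
    fun x => (1 - Real.sqrt 3 * σ)⁻¹ * (|(F' x).det| • φ (T x)) with hg
  have hg0 : ∀ x, 0 ≤ g x := by
    intro x
    simp only [hg, smul_eq_mul]
    exact mul_nonneg (inv_nonneg.2 hc.le) (mul_nonneg (abs_nonneg _) (hφ0 _))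
  have hgS_int : IntegrableOn g S := hg_int.const_mul _
  have hind_int : Integrable (S.indicator g) (volume.restrict Ω) :=
    ((integrable_indicator_iff hSmeas).2 hgS_int).restrict
  -- pointwise a.e. bound
  have hae : ∀ᵐ x ∂(volume.restrict Ω),
      ((σ * Metric.infDist x Ωᶜ) ^ 3)⁻¹ * φ ((σ * Metric.infDist x Ωᶜ)⁻¹ • (x - z))
        ≤ S.indicator g x := by
    rw [ae_restrict_iff' hopen.measurableSet]
    filter_upwards [hlip.ae_differentiableAt (μ := volume)] with x hxD hxΩ
    by_cases hT3 : ‖T x‖ < 2 / 3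
    · have hxS : x ∈ S := ⟨⟨hxΩ, hT3⟩, hxD⟩
      rw [Set.indicator_of_mem hxS]
      simp only [hg, smul_eq_mul]
      have hlb := hdetlb x hxS
      have hφ0' := hφ0 (T x)
      have h' : ((σ * Metric.infDist x Ωᶜ) ^ 3)⁻¹
          ≤ (1 - Real.sqrt 3 * σ)⁻¹ * |(F' x).det| := by
        rw [inv_mul_eq_div]
        exact (le_div_iff₀ hc).2 hlb
      have harg : (σ * Metric.infDist x Ωᶜ)⁻¹ • (x - z) = T x := rfl
      rw [harg]
      calc ((σ * Metric.infDist x Ωᶜ) ^ 3)⁻¹ * φ (T x)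
          ≤ ((1 - Real.sqrt 3 * σ)⁻¹ * |(F' x).det|) * φ (T x) :=
            mul_le_mul_of_nonneg_right h' hφ0'
        _ = (1 - Real.sqrt 3 * σ)⁻¹ * (|(F' x).det| * φ (T x)) := by ring
    · push_neg at hT3
      have hz0 : φ (T x) = 0 := hφsupp _ hT3
      have harg : (σ * Metric.infDist x Ωᶜ)⁻¹ • (x - z) = T x := rfl
      rw [harg, hz0, mul_zero]
      exact Set.indicator_nonneg (fun y _ => hg0 y) x
  -- main chain
  calc ∫ x in Ω, ((σ * Metric.infDist x Ωᶜ) ^ 3)⁻¹ *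
          φ ((σ * Metric.infDist x Ωᶜ)⁻¹ • (x - z))
      ≤ ∫ x in Ω, S.indicator g x :=
        integral_mono_of_nonneg
          (Filter.Eventually.of_forall (fun x => mul_nonneg
            (inv_nonneg.2 (pow_nonneg (mul_nonneg hσ0.le Metric.infDist_nonneg) 3))
            (hφ0 _))) hind_int hae
    _ = ∫ x in S, g x := by
        rw [setIntegral_indicator hSmeas, Set.inter_eq_self_of_subset_right hsub]
    _ = (1 - Real.sqrt 3 * σ)⁻¹ * ∫ x in S, |(F' x).det| • φ (T x) := by
        rw [hg, ← integral_const_mul]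
    _ = (1 - Real.sqrt 3 * σ)⁻¹ * ∫ y in T '' S, φ y := by rw [himg]
    _ ≤ (1 - Real.sqrt 3 * σ)⁻¹ * 1 :=
        mul_le_mul_of_nonneg_left hle1 (inv_nonneg.2 hc.le)
    _ = 1 / (1 - Real.sqrt 3 * σ) := by rw [mul_one, one_div]
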